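/- Let D be a positive integer that is not a perfect square, and let a₁, a₂, b₁, b₂ be complex numbers such that a₁ ≠ 0. Suppose B' is a 2×2 matrix with entries in Q(√D) of the form B/λ where B is a 2×2 rational matrix with det(B) ≠ 0 and λ = (e + √D)/2 for some integer e with λ ∉ Q. Then the Q-linear map from Q⁴ to Q(√D)² sending v to (I₂ | B')·v is injective. -/

import Mathlib

/-- Let `D` be a positive non-square integer, `a₁, a₂, b₁, b₂` complex numbers with `a₁ ≠ 0`,
and `B' = (1/λ)·B` a 2×2 real matrix, where `B` is a rational matrix with `det B ≠ 0` and
`λ = (e + √D)/2` is irrational. Then the `ℚ`-linear map `ℚ⁴ → ℚ(√D)² ⊆ ℝ²` sending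
`v` to `(I₂ | B')·v` is injective. -/
theorem concat_identity_matrix_injective (D : ℕ) (hD : 0 < D) (hsq : ¬ IsSquare D)
    (a₁ a₂ b₁ b₂ : ℂ) (ha₁ : a₁ ≠ 0)
    (B : Matrix (Fin 2) (Fin 2) ℚ) (hB : B.det ≠ 0)
    (e : ℤ) (l : ℝ) (hl : l = ((e : ℝ) + Real.sqrt D) / 2) (hirr : Irrational l)
    (B' : Matrix (Fin 2) (Fin 2) ℝ) (hB' : B' = l⁻¹ • (B.map (fun x => (x : ℝ)))) :
    Function.Injective (fun v : Fin 4 → ℚ => fun i : Fin 2 =>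
      (v (Fin.castAdd 2 i) : ℝ) + ∑ j : Fin 2, B' i j * (v (Fin.natAdd 2 j) : ℝ)) := by
  have hl0 : l ≠ 0 := by
    have := hirr.ne_rat 0
    simpa using this
  intro v w h
  simp only [funext_iff] at h
  set x : Fin 2 → ℚ := fun i => v (Fin.castAdd 2 i) - w (Fin.castAdd 2 i) with hx
  set y : Fin 2 → ℚ := fun j => v (Fin.natAdd 2 j) - w (Fin.natAdd 2 j) with hy
  have key : ∀ i : Fin 2,
      l * (x i : ℝ) + ((B i 0 : ℝ) * (y 0 : ℝ) + (B i 1 : ℝ) * (y 1 : ℝ)) = 0 := by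
    intro i
    have h1 := h i
    simp only [hB', Matrix.smul_apply, Matrix.map_apply, smul_eq_mul,
      Fin.sum_univ_two] at h1
    have h2 : (x i : ℝ) + l⁻¹ * ((B i 0 : ℝ) * (y 0 : ℝ) + (B i 1 : ℝ) * (y 1 : ℝ)) = 0 := by
      push_cast [hx, hy]
      ring_nf
      ring_nf at h1
      rw [show (Fin.natAdd 2 (0 : Fin 2) : Fin 4) = 2 from rfl,
        show (Fin.natAdd 2 (1 : Fin 2) : Fin 4) = 3 from rfl] at h1
      linarith [h1]
    field_simp at h2
    linarith [h2]
  have hx0 : ∀ i : Fin 2, x i = 0 := by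
    intro i
    by_contra hxi
    apply hirr
    refine ⟨-(B i 0 * y 0 + B i 1 * y 1) / x i, ?_⟩
    have h3 := key i
    have hxr : (x i : ℝ) ≠ 0 := by exact_mod_cast hxi
    push_cast
    field_simp
    linarith [h3]
  have hy0 : B.mulVec y = 0 := by
    funext i
    have h3 := key i
    rw [hx0 i] at h3
    push_cast at h3
    have h4 : (B i 0 * y 0 + B i 1 * y 1 : ℚ) = 0 := by
      exact_mod_cast (by linarith [h3] : (B i 0 : ℝ) * (y 0 : ℝ) + (B i 1 : ℝ) * (y 1 : ℝ) = 0)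
    simpa [Matrix.mulVec, dotProduct, Fin.sum_univ_two] using h4
  have hy0' : y = 0 := Matrix.eq_zero_of_mulVec_eq_zero hB hy0
  funext k
  refine Fin.addCases (m := 2) (n := 2) (motive := fun k => v k = w k) ?_ ?_ k
  · intro i
    have h5 := hx0 i
    rw [hx] at h5
    simp only at h5
    linarith [sub_eq_zero.mp h5]
  · intro j
    have h5 : y j = 0 := by rw [hy0']; rfl
    rw [hy] at h5
    simp only at h5
    linarith [sub_eq_zero.mp h5]
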